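/- Let S be a finite set with at least two elements and let V ⊆ S. Then 𝒯(V) is a pre-transfer system on S if and only if V does not have exactly one element. -/
import Mathlib


/-- A collection `𝒯` of subsets of `S` is a *transfer system* on `S` if there exists an
equivalence relation `∼` on the subsets of `S` such that for every `T ⊆ S`:
`T ∈ 𝒯` if and only if for every `U ⊆ S ∖ T` one has `U ∼ U ∪ T`. -/
def IsTransferSystem {S : Type*} (𝒯 : Set (Set S)) : Prop :=
  ∃ r : Set S → Set S → Prop, Equivalence r ∧
    ∀ T : Set S, T ∈ 𝒯 ↔ ∀ U : Set S, U ⊆ Tᶜ → r U (U ∪ T)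

/-- A collection `𝒯` of subsets of `S` is a *pre-transfer system* on `S` if:
(i) `∅ ∈ 𝒯`; (ii) whenever `T₁, T₂ ∈ 𝒯` and `T₁ ∩ T₂ ∈ 𝒯`, then `T₁ ∪ T₂ ∈ 𝒯`;
(iii) whenever `T₁, T₂ ⊆ S` are disjoint, `T₁ ∈ 𝒯`, `T₁ ∪ T₂ ∈ 𝒯`, and for every
proper subset `U` of `T₁` either `U ∈ 𝒯` or `T₁ \ U ∈ 𝒯`, then `T₂ ∈ 𝒯`. -/
def IsPreTransferSystem {S : Type*} (𝒯 : Set (Set S)) : Prop :=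
  ∅ ∈ 𝒯 ∧
  (∀ T₁ T₂ : Set S, T₁ ∈ 𝒯 → T₂ ∈ 𝒯 → T₁ ∩ T₂ ∈ 𝒯 → T₁ ∪ T₂ ∈ 𝒯) ∧
  (∀ T₁ T₂ : Set S, Disjoint T₁ T₂ → T₁ ∈ 𝒯 → T₁ ∪ T₂ ∈ 𝒯 →
    (∀ U : Set S, U ⊂ T₁ → U ∈ 𝒯 ∨ T₁ \ U ∈ 𝒯) → T₂ ∈ 𝒯)

/-- For `V ⊆ S`, the collection `𝒯(V) = {∅} ∪ {A ⊆ S : V ⊆ A}`. -/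
def principalSystem {S : Type*} (V : Set S) : Set (Set S) :=
  {A : Set S | A = ∅ ∨ V ⊆ A}

/-- Let `S` be a finite set with at least two elements and `V ⊆ S`. Then `𝒯(V)` is a
pre-transfer system on `S` if and only if `V` does not have exactly one element. -/
theorem principalSystem_isPreTransferSystem_iff {S : Type*} [Finite S]
    (hS : 2 ≤ Nat.card S) (V : Set S) :
    IsPreTransferSystem (principalSystem V) ↔ ¬(∃ v : S, V = {v}) := by
  have hnt : Nontrivial S := Finite.one_lt_card_iff_nontrivial.mp hS
  constructor
  · rintro ⟨h0, h2, h3⟩ ⟨v, rfl⟩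
    obtain ⟨w, hw⟩ := exists_ne v
    have hmem : ({w} : Set S) ∈ principalSystem {v} := by
      apply h3 {v} {w}
      · exact Set.disjoint_singleton.mpr hw.symm
      · exact Or.inr subset_rfl
      · exact Or.inr Set.subset_union_left
      · intro U hU
        rw [Set.ssubset_singleton_iff] at hU
        exact Or.inl (Or.inl hU)
    rcases hmem with h | h
    · exact (Set.singleton_ne_empty w) h
    · exact hw (Set.singleton_subset_iff.mp h).symm
  · intro hV
    refine ⟨Or.inl rfl, ?_, ?_⟩
    · rintro T₁ T₂ (rfl | h1) (rfl | h2) _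
      · exact Or.inl (by simp)
      · exact Or.inr (h2.trans Set.subset_union_right)
      · exact Or.inr (h1.trans Set.subset_union_left)
      · exact Or.inr (h1.trans Set.subset_union_left)
    · rintro T₁ T₂ hd (rfl | h1) h12 hsub
      · simpa using h12
      · rcases Set.subsingleton_or_nontrivial V with hs | hns
        · rcases hs.eq_empty_or_singleton with rfl | ⟨v, rfl⟩
          · exact Or.inr (Set.empty_subset _)
          · exact absurd ⟨v, rfl⟩ hV
        · obtain ⟨v, hv, w, hw, hvw⟩ := hns
          have hvT : v ∈ T₁ := h1 hv
          have hwT : w ∈ T₁ := h1 hw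
          have hU : T₁ \ {v} ⊂ T₁ := Set.sdiff_singleton_ssubset.mpr hvT
          rcases hsub _ hU with (he | hVs) | (he | hVs)
          · exact absurd he (Set.nonempty_iff_ne_empty.mp ⟨w, hwT, by simpa using Ne.symm hvw⟩)
          · exact absurd (hVs hv).2 (by simp)
          · have : v ∈ T₁ \ (T₁ \ {v}) := ⟨hvT, fun h => h.2 rfl⟩  -- fix
            rw [he] at this
            exact absurd this (Set.notMem_empty v)
          · have hdd : T₁ \ (T₁ \ {v}) = {v} := by
              rw [Set.diff_diff_cancel_left (Set.singleton_subset_iff.mpr hvT)]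
            rw [hdd] at hVs
            have : w ∈ ({v} : Set S) := hVs hw
            exact absurd (by simpa using this.symm : v = w) hvw
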